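/- Every finite potent endomorphism φ of a k-vector space V admits a G-Drazin inverse, i.e., there exists an endomorphism ψ of V with φ∘ψ∘φ = φ and ψ∘φ^r = φ^r∘ψ, where r is the index of φ. -/

import Mathlib

theorem exists_inner_inverse {k M : Type*} [Field k] [AddCommGroup M] [Module k M]
    (f : M →ₗ[k] M) : ∃ g : M →ₗ[k] M, f ∘ₗ g ∘ₗ f = f := by
  obtain ⟨C, hC⟩ := Submodule.exists_isCompl (LinearMap.ker f)
  obtain ⟨D, hD⟩ := Submodule.exists_isCompl (LinearMap.range f)
  let f' : C →ₗ[k] LinearMap.range f := (f ∘ₗ C.subtype).codRestrict _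
    (fun c => ⟨(c : M), rfl⟩)
  have hinj : Function.Injective f' := by
    intro x y hxy
    have h1 : f (x : M) = f (y : M) := congrArg Subtype.val hxy
    have hmem : (x : M) - y ∈ LinearMap.ker f ⊓ C := by
      refine ⟨?_, C.sub_mem x.2 y.2⟩
      simp [LinearMap.mem_ker, map_sub, h1]
    rw [hC.inf_eq_bot] at hmem
    exact Subtype.ext (sub_eq_zero.mp ((Submodule.mem_bot k).mp hmem))
  have hsurj : Function.Surjective f' := by
    rintro ⟨-, x, rfl⟩
    obtain ⟨u, hu, c, hc, rfl⟩ := Submodule.mem_sup.mp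
      (hC.sup_eq_top ▸ Submodule.mem_top : x ∈ LinearMap.ker f ⊔ C)
    exact ⟨⟨c, hc⟩, Subtype.ext (by simp [f', LinearMap.mem_ker.mp hu]; rfl)⟩
  let e : C ≃ₗ[k] LinearMap.range f := LinearEquiv.ofBijective f' ⟨hinj, hsurj⟩
  refine ⟨C.subtype ∘ₗ (e.symm : LinearMap.range f →ₗ[k] C) ∘ₗ
    (LinearMap.range f).linearProjOfIsCompl D hD, ?_⟩
  ext x
  have hproj : (LinearMap.range f).linearProjOfIsCompl D hD (f x) = ⟨f x, ⟨x, rfl⟩⟩ :=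
    Submodule.linearProjOfIsCompl_apply_left hD ⟨f x, ⟨x, rfl⟩⟩
  simp only [LinearMap.comp_apply, hproj]
  exact congrArg Subtype.val (e.apply_symm_apply ⟨f x, ⟨x, rfl⟩⟩)

/-- Every finite potent endomorphism admits a G-Drazin inverse. -/
theorem stmt2 {k V : Type*} [Field k] [AddCommGroup V] [Module k V]
    (φ : Module.End k V) (U W : Submodule k V) (r : ℕ)
    (hcompl : IsCompl U W)
    (hUinv : ∀ u ∈ U, φ u ∈ U) (hWinv : ∀ w ∈ W, φ w ∈ W)
    (hfin : FiniteDimensional k W)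
    (hnil : ∀ u ∈ U, (φ ^ r) u = 0)
    (hmin : ∀ s < r, ∃ u ∈ U, (φ ^ s) u ≠ 0)
    (hWsurj : ∀ w ∈ W, ∃ w' ∈ W, φ w' = w)
    (hWinj : ∀ w ∈ W, φ w = 0 → w = 0) :
    ∃ ψ : Module.End k V, φ * ψ * φ = φ ∧ ψ * φ ^ r = φ ^ r * ψ := by
  set φU : U →ₗ[k] U := φ.restrict hUinv with hφU
  set φW : W →ₗ[k] W := φ.restrict hWinv with hφW
  have hWbij : Function.Bijective φW := by
    constructor
    · intro x y hxy
      have : φ ((x : V) - y) = 0 := by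
        have := congrArg Subtype.val hxy
        change φ (x : V) = φ (y : V) at this
        simp [map_sub, this]
      exact Subtype.ext (sub_eq_zero.mp (hWinj _ (W.sub_mem x.2 y.2) this))
    · intro y
      obtain ⟨w', hw', hw⟩ := hWsurj y y.2
      exact ⟨⟨w', hw'⟩, Subtype.ext hw⟩
  let eW : W ≃ₗ[k] W := LinearEquiv.ofBijective φW hWbij
  obtain ⟨ψU, hψU⟩ := exists_inner_inverse φU
  set ψ : Module.End k V := LinearMap.ofIsCompl hcompl (U.subtype ∘ₗ ψU)
    (W.subtype ∘ₗ (eW.symm : W →ₗ[k] W)) with hψ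
  have hψ_left : ∀ u : U, ψ (u : V) = (ψU u : V) :=
    fun u => LinearMap.ofIsCompl_left_apply hcompl u
  have hψ_right : ∀ w : W, ψ (w : V) = (eW.symm w : V) :=
    fun w => LinearMap.ofIsCompl_right_apply hcompl w
  have heW : ∀ x : W, eW x = φW x := fun x => rfl
  have hcomm : ∀ x : W, eW.symm (φW x) = φW (eW.symm x) := by
    intro x
    show eW.symm (eW x) = _
    rw [eW.symm_apply_apply]
    exact (eW.apply_symm_apply x).symm
  have hcommn : ∀ (n : ℕ) (x : W), eW.symm ((φW ^ n) x) = (φW ^ n) (eW.symm x) := by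
    intro n
    induction n with
    | zero => simp
    | succ m ih =>
      intro x
      rw [pow_succ, Module.End.mul_apply, Module.End.mul_apply, ih, hcomm]
  have hpowW : ∀ (n : ℕ) (x : W), (φ ^ n) (x : V) = ((φW ^ n) x : V) := by
    intro n x
    conv_rhs => rw [hφW, Module.End.pow_restrict n hWinv]
    rw [LinearMap.restrict_coe_apply]
  refine ⟨ψ, ?_, ?_⟩
  · ext x
    obtain ⟨u, hu, w, hw, rfl⟩ := Submodule.mem_sup.mp
      (hcompl.sup_eq_top ▸ Submodule.mem_top : x ∈ U ⊔ W)
    simp only [Module.End.mul_apply, map_add]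
    have h1 : φ (ψ (φ u)) = φ u := by
      have hφu : φ u = ((φU ⟨u, hu⟩ : U) : V) := rfl
      rw [hφu, hψ_left, ← φ.restrict_coe_apply hUinv]
      exact congrArg Subtype.val (LinearMap.ext_iff.mp hψU ⟨u, hu⟩)
    have h2 : φ (ψ (φ w)) = φ w := by
      have hφw : φ w = ((φW ⟨w, hw⟩ : W) : V) := rfl
      rw [hφw, hψ_right, ← heW, eW.symm_apply_apply]
      exact hφw.symm
    rw [h1, h2]
  · ext x
    obtain ⟨u, hu, w, hw, rfl⟩ := Submodule.mem_sup.mp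
      (hcompl.sup_eq_top ▸ Submodule.mem_top : x ∈ U ⊔ W)
    simp only [Module.End.mul_apply, map_add]
    have h1 : ψ ((φ ^ r) u) = (φ ^ r) (ψ u) := by
      rw [hnil u hu, map_zero, hψ_left ⟨u, hu⟩, hnil _ (ψU ⟨u, hu⟩).2]
    have h2 : ψ ((φ ^ r) w) = (φ ^ r) (ψ w) := by
      rw [hpowW r ⟨w, hw⟩, hψ_right, hψ_right ⟨w, hw⟩, hpowW r, hcommn]
    rw [h1, h2]
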